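/- Let $\pi_A \sqsubseteq \mathbb{F}_q^{\ell}$ be a subspace of dimension $d_A$ and let $X_A$ be any matrix with $\mathrm{rowspan}(X_A) = \pi_A$, $X_A \in \mathbb{F}_q^{n_A \times \ell}$. If $F$ is uniform in $\mathbb{F}_q^{n \times n_A}$ and $\Pi = \mathrm{rowspan}(F X_A)$, then for any subspace $\pi \sqsubseteq \pi_A$ with $\dim \pi = d$, $\Pr[\Pi = \pi] = \xi(n, d)\, q^{-n d_A}$, where $\xi(n,d)$ is the number of $n \times \ell$ matrices whose rows span a fixed $d$-dimensional subspace. -/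

import Mathlib

theorem subspace_channel_transition_probability
    (F : Type*) [Field F] [Fintype F] (n nA ℓ dA d : ℕ)
    (XA : Matrix (Fin nA) (Fin ℓ) F) (πA π : Submodule F (Fin ℓ → F))
    (hXA : Submodule.span F (Set.range XA) = πA)
    (hdA : Module.finrank F πA = dA)
    (hsub : π ≤ πA) (hd : Module.finrank F π = d) :
    (Nat.card {G : Matrix (Fin n) (Fin nA) F //
        Submodule.span F (Set.range (G * XA)) = π} : ℚ)
      / (Fintype.card F : ℚ) ^ (n * nA)
      = (Nat.card {Y : Matrix (Fin n) (Fin ℓ) F //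
          Submodule.span F (Set.range Y) = π} : ℚ)
        * (Fintype.card F : ℚ) ^ (-(n * dA : ℤ)) := by
  classical
  set φ : (Fin nA → F) →ₗ[F] (Fin ℓ → F) := XA.vecMulLinear with hφ
  have hrange : LinearMap.range φ = πA := by
    rw [hφ, range_vecMulLinear]; exact hXA
  have hrow : ∀ (G : Matrix (Fin n) (Fin nA) F) (i : Fin n),
      (G * XA) i = φ (G i) := by
    intro G i
    funext j
    simp [hφ, Matrix.mul_apply, Matrix.vecMul, dotProduct]
  obtain ⟨g, hg⟩ := φ.rangeRestrict.exists_rightInverse_of_surjective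
    (LinearMap.range_rangeRestrict φ)
  have hginv : ∀ y : LinearMap.range φ, φ (g y) = (y : Fin ℓ → F) := by
    intro y
    have := congrArg (Subtype.val) (LinearMap.congr_fun hg y)
    simpa using this
  have hmem : ∀ (Y : Matrix (Fin n) (Fin ℓ) F),
      Submodule.span F (Set.range Y) = π → ∀ i, Y i ∈ LinearMap.range φ := by
    intro Y hY i
    rw [hrange]
    exact hsub (hY ▸ Submodule.subset_span (Set.mem_range_self i))
  let e : {G : Matrix (Fin n) (Fin nA) F //
        Submodule.span F (Set.range (G * XA)) = π} ≃
      {Y : Matrix (Fin n) (Fin ℓ) F //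
        Submodule.span F (Set.range Y) = π} × (Fin n → LinearMap.ker φ) :=
    { toFun := fun G =>
        (⟨G.1 * XA, G.2⟩,
         fun i => ⟨G.1 i - g ⟨φ (G.1 i), LinearMap.mem_range_self φ (G.1 i)⟩, by
            simp [LinearMap.mem_ker, map_sub, hginv]⟩)
      invFun := fun P =>
        ⟨Matrix.of fun i => g ⟨P.1.1 i, hmem _ P.1.2 i⟩ + (P.2 i : Fin nA → F), by
          have hYeq : (Matrix.of fun i =>
              g ⟨P.1.1 i, hmem _ P.1.2 i⟩ + (P.2 i : Fin nA → F)) * XA = P.1.1 := by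
            funext i j
            refine congrFun ?_ j
            rw [hrow]
            show φ (g ⟨P.1.1 i, hmem _ P.1.2 i⟩ + (P.2 i : Fin nA → F)) = P.1.1 i
            rw [map_add, hginv, (P.2 i).2, add_zero]
          rw [hYeq]; exact P.1.2⟩
      left_inv := fun G => by
        apply Subtype.ext
        funext i
        show g ⟨(G.1 * XA) i, hmem _ G.2 i⟩
            + (G.1 i - g ⟨φ (G.1 i), LinearMap.mem_range_self φ (G.1 i)⟩) = G.1 i
        rw [show (⟨(G.1 * XA) i, hmem _ G.2 i⟩ : LinearMap.range φ)
            = ⟨φ (G.1 i), LinearMap.mem_range_self φ (G.1 i)⟩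
            from Subtype.ext (hrow G.1 i)]
        abel
      right_inv := fun P => by
        obtain ⟨⟨Y, hY⟩, k⟩ := P
        have hr : ∀ i, φ (g ⟨Y i, hmem Y hY i⟩ + (k i : Fin nA → F)) = Y i := by
          intro i
          rw [map_add, hginv, (k i).2, add_zero]
        have hYeq : (Matrix.of fun i =>
            g ⟨Y i, hmem Y hY i⟩ + (k i : Fin nA → F)) * XA = Y := by
          funext i j
          refine congrFun ?_ j
          rw [hrow]
          exact hr i
        refine Prod.ext (Subtype.ext hYeq) (funext fun i => Subtype.ext ?_)
        show (g ⟨Y i, hmem Y hY i⟩ + (k i : Fin nA → F))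
            - g ⟨φ (g ⟨Y i, hmem Y hY i⟩ + (k i : Fin nA → F)),
                LinearMap.mem_range_self φ _⟩ = (k i : Fin nA → F)
        rw [show (⟨φ (g ⟨Y i, hmem Y hY i⟩ + (k i : Fin nA → F)),
              LinearMap.mem_range_self φ _⟩ : LinearMap.range φ)
            = ⟨Y i, hmem Y hY i⟩ from Subtype.ext (hr i)]
        abel }
  -- cardinality of the kernel
  have hker : Module.finrank F (LinearMap.ker φ) = nA - dA := by
    have h1 := LinearMap.finrank_range_add_finrank_ker φ
    rw [hrange, hdA] at h1
    have h2 : Module.finrank F (Fin nA → F) = nA := by simp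
    omega
  have hdAle : dA ≤ nA := by
    have h1 := LinearMap.finrank_range_add_finrank_ker φ
    rw [hrange, hdA] at h1
    have h2 : Module.finrank F (Fin nA → F) = nA := by simp
    omega
  have : Fintype ↥(LinearMap.ker φ) := Fintype.ofFinite _
  have hkcard : Nat.card (LinearMap.ker φ) = Fintype.card F ^ (nA - dA) := by
    rw [Nat.card_eq_fintype_card, Module.card_eq_pow_finrank (K := F), hker]
  have hcard : (Nat.card {G : Matrix (Fin n) (Fin nA) F //
        Submodule.span F (Set.range (G * XA)) = π} : ℚ)
      = (Nat.card {Y : Matrix (Fin n) (Fin ℓ) F //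
          Submodule.span F (Set.range Y) = π} : ℚ)
        * (Fintype.card F : ℚ) ^ ((nA - dA) * n) := by
    rw [Nat.card_congr e, Nat.card_prod, Nat.card_fun, hkcard]
    push_cast
    ring_nf
    simp [pow_mul, mul_comm]
  rw [hcard]
  have hq0 : (Fintype.card F : ℚ) ≠ 0 := by
    exact_mod_cast Fintype.card_ne_zero
  have hz : (Fintype.card F : ℚ) ^ (-(n * dA : ℤ))
      = ((Fintype.card F : ℚ) ^ (n * dA))⁻¹ := by
    rw [zpow_neg, ← zpow_natCast (Fintype.card F : ℚ) (n * dA)]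
    push_cast
    ring
  rw [hz]
  field_simp
  rw [mul_assoc, ← pow_add]
  congr 2
  zify [hdAle]
  ring
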